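/- Let A = (Q, Σ, δ, ρ) be a connected invertible reversible Mealy automaton. Let m ≥ 1, let T be a connected component of A^m and let L be a connected component of A^{m+1}, and assume that every word of L has its length-m suffix in T. Then T equals the union over x ∈ Q of the left quotients x⁻¹L = {u ∈ Q^m : x·u ∈ L}, i.e., T = ⋃_{x∈Q} {u ∈ Q^m : x·u ∈ L}. -/
import Mathlib


/-!
Mealy automata: common definitions.

A Mealy automaton on stateset `Q` and alphabet `Γ` is given by transition
functions `δ : Γ → Q → Q` (for each input letter) and output functions
`ρ : Q → Γ → Γ` (for each state); it has a transition `x —i|j→ y` exactly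
when `δ i x = y` and `ρ x i = j`.
-/

/-- Extended output function `ρ_x : Γ* → Γ*` of a single state. -/
def rhoStar {Q Γ : Type*} (δ : Γ → Q → Q) (ρ : Q → Γ → Γ) : Q → List Γ → List Γ
  | _, [] => []
  | x, i :: s => ρ x i :: rhoStar δ ρ (δ i x) s

/-- `ρ_u : Γ* → Γ*` for a word `u = x₁⋯x_n` of states: `ρ_u = ρ_{x_n} ∘ ⋯ ∘ ρ_{x₁}`. -/
def rhoWord {Q Γ : Type*} (δ : Γ → Q → Q) (ρ : Q → Γ → Γ) : List Q → List Γ → List Γ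
  | [], s => s
  | x :: u, s => rhoWord δ ρ u (rhoStar δ ρ x s)

/-- `ρ_u : Γ → Γ` on single letters (the output function of the power automaton). -/
def rhoLetter {Q Γ : Type*} (ρ : Q → Γ → Γ) : List Q → Γ → Γ
  | [], i => i
  | x :: u, i => rhoLetter ρ u (ρ x i)

/-- Extended transition function `δ_i : Q* → Q*` (the transition function of powers). -/
def deltaStar {Q Γ : Type*} (δ : Γ → Q → Q) (ρ : Q → Γ → Γ) : Γ → List Q → List Q
  | _, [] => []
  | i, x :: u => δ i x :: deltaStar δ ρ (ρ x i) u

/-- Sequential application `δ_s = δ_{s_n} ∘ ⋯ ∘ δ_{s₁}` of the letters of a word `s`. -/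
def applyWord {S Γ : Type*} (d : Γ → S → S) : List Γ → S → S
  | [], x => x
  | i :: s, x => applyWord d s (d i x)

/-- The orbit `{δ_s(x) : s ∈ Γ*}` of a state: for reversible automata this is
exactly the (strongly) connected component of `x`. -/
def orbitOf {S Γ : Type*} (d : Γ → S → S) (x : S) : Set S :=
  {y | ∃ s : List Γ, applyWord d s x = y}

/-- An automaton is invertible when every output function is a permutation. -/
def MInvertible {Q Γ : Type*} (ρ : Q → Γ → Γ) : Prop := ∀ x, Function.Bijective (ρ x)

/-- An automaton is reversible when every transition function is a permutation. -/
def MReversible {Q Γ : Type*} (δ : Γ → Q → Q) : Prop := ∀ i, Function.Bijective (δ i)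

/-- Coreversibility: `δ_i(y) = δ_{i'}(z)` and `ρ_y(i) = ρ_z(i')` imply `y = z`. -/
def MCoreversible {Q Γ : Type*} (δ : Γ → Q → Q) (ρ : Q → Γ → Γ) : Prop :=
  ∀ y z : Q, ∀ i i' : Γ, δ i y = δ i' z → ρ y i = ρ z i' → y = z

/-- Bireversible: invertible, reversible and coreversible. -/
def MBireversible {Q Γ : Type*} (δ : Γ → Q → Q) (ρ : Q → Γ → Γ) : Prop :=
  MInvertible ρ ∧ MReversible δ ∧ MCoreversible δ ρ

/-- Connectedness: every state is reachable from every state. -/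
def MConnected {Q Γ : Type*} (δ : Γ → Q → Q) : Prop :=
  ∀ x y : Q, ∃ s : List Γ, applyWord δ s x = y

/-- Invertibility of a component `C` (as an automaton with stateset `C`). -/
def CompInvertible {S Γ : Type*} (r : S → Γ → Γ) (C : Set S) : Prop :=
  ∀ x ∈ C, Function.Bijective (r x)

/-- Reversibility of a component `C`: each transition function permutes `C`. -/
def CompReversible {S Γ : Type*} (d : Γ → S → S) (C : Set S) : Prop :=
  ∀ i : Γ, Set.BijOn (d i) C C

/-- Coreversibility of a component `C` (as an automaton with stateset `C`). -/
def CompCoreversible {S Γ : Type*} (d : Γ → S → S) (r : S → Γ → Γ) (C : Set S) : Prop :=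
  ∀ y ∈ C, ∀ z ∈ C, ∀ i i' : Γ, d i y = d i' z → r y i = r z i' → y = z

/-- Bireversibility of a component `C` (as an automaton with stateset `C`). -/
def CompBireversible {S Γ : Type*} (d : Γ → S → S) (r : S → Γ → Γ) (C : Set S) : Prop :=
  CompInvertible r C ∧ CompReversible d C ∧ CompCoreversible d r C

/-- Transition functions of the product `A × B` of two Mealy automata. -/
def prodD {Q Q' Γ : Type*} (δ : Γ → Q → Q) (ρ : Q → Γ → Γ) (δ' : Γ → Q' → Q') :
    Γ → Q × Q' → Q × Q' :=
  fun i p => (δ i p.1, δ' (ρ p.1 i) p.2)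

/-- Output functions of the product `A × B` of two Mealy automata. -/
def prodR {Q Q' Γ : Type*} (ρ : Q → Γ → Γ) (ρ' : Q' → Γ → Γ) : Q × Q' → Γ → Γ :=
  fun p i => ρ' p.2 (ρ p.1 i)

/-- `u^n`: the `n`-fold concatenation of a word with itself. -/
def wordPow {Q : Type*} (u : List Q) : ℕ → List Q
  | 0 => []
  | n + 1 => u ++ wordPow u n

section Aux
variable {Q Γ S : Type*}

lemma applyWord_append (d : Γ → S → S) (s t : List Γ) (x : S) :
    applyWord d (s ++ t) x = applyWord d t (applyWord d s x) := by
  induction s generalizing x with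
  | nil => rfl
  | cons i s ih => simp [applyWord, ih]

lemma applyWord_wordPow (d : Γ → S → S) (s : List Γ) (k : ℕ) (x : S) :
    applyWord d (wordPow s k) x = (applyWord d s)^[k] x := by
  induction k generalizing x with
  | zero => rfl
  | succ k ih =>
      rw [wordPow, applyWord_append, ih, ← Function.iterate_succ_apply]

lemma deltaStar_length (δ : Γ → Q → Q) (ρ : Q → Γ → Γ) (i : Γ) (l : List Q) :
    (deltaStar δ ρ i l).length = l.length := by
  induction l generalizing i with
  | nil => rfl
  | cons x u ih => simp [deltaStar, ih]

lemma applyWord_deltaStar_length (δ : Γ → Q → Q) (ρ : Q → Γ → Γ) (s : List Γ) (l : List Q) :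
    (applyWord (deltaStar δ ρ) s l).length = l.length := by
  induction s generalizing l with
  | nil => rfl
  | cons i s ih => simp [applyWord, ih, deltaStar_length]

lemma deltaStar_injective (δ : Γ → Q → Q) (ρ : Q → Γ → Γ) (hRev : MReversible δ) (i : Γ) :
    Function.Injective (deltaStar δ ρ i) := by
  have key : ∀ (u v : List Q) (i : Γ), deltaStar δ ρ i u = deltaStar δ ρ i v → u = v := by
    intro u
    induction u with
    | nil =>
        intro v i h
        cases v with
        | nil => rfl
        | cons y v => simp [deltaStar] at h
    | cons x u ih =>
        intro v i h
        cases v with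
        | nil => simp [deltaStar] at h
        | cons y v =>
            simp only [deltaStar, List.cons.injEq] at h
            obtain ⟨h1, h2⟩ := h
            have hxy : x = y := (hRev i).1 h1
            subst hxy
            exact congrArg _ (ih _ _ h2)
  exact fun u v h => key u v i h

lemma applyWord_injective (d : Γ → S → S) (hinj : ∀ i, Function.Injective (d i))
    (s : List Γ) : Function.Injective (applyWord d s) := by
  induction s with
  | nil => exact fun a b h => h
  | cons i s ih => exact fun a b h => hinj i (ih h)

lemma orbit_symm (d : Γ → S → S) (hinj : ∀ i, Function.Injective (d i))
    {x y : S} (hfin : (orbitOf d x).Finite) (s : List Γ) (hs : applyWord d s x = y) :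
    ∃ t : List Γ, applyWord d t y = x := by
  set g := applyWord d s with hg
  have hginj : Function.Injective g := applyWord_injective d hinj s
  have hmem : ∀ k : ℕ, g^[k] x ∈ orbitOf d x := by
    intro k
    exact ⟨wordPow s k, applyWord_wordPow d s k x⟩
  have : ∃ a b : ℕ, a ≠ b ∧ g^[a] x = g^[b] x := by
    haveI := hfin.to_subtype
    obtain ⟨a, b, hab, h⟩ := Finite.exists_ne_map_eq_of_infinite
      (fun k : ℕ => (⟨g^[k] x, hmem k⟩ : orbitOf d x))
    exact ⟨a, b, hab, congrArg Subtype.val h⟩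
  obtain ⟨a, b, hab, h⟩ := this
  wlog hlt : a < b generalizing a b
  · exact this b a hab.symm h.symm (by omega)
  have hc : x = g^[b - a] x := by
    have : g^[a] x = g^[a] (g^[b - a] x) := by
      rw [← Function.iterate_add_apply]
      rw [show a + (b - a) = b by omega]
      exact h
    exact hginj.iterate a this
  obtain ⟨c, hc'⟩ : ∃ c, b - a = c + 1 := ⟨b - a - 1, by omega⟩
  refine ⟨wordPow s c, ?_⟩
  rw [applyWord_wordPow, ← hs]
  rw [hc', Function.iterate_succ_apply] at hc
  exact hc.symm

lemma rhoStar_surj (δ : Γ → Q → Q) (ρ : Q → Γ → Γ) (hInv : MInvertible ρ)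
    (t : List Γ) : ∀ y : Q, ∃ s : List Γ, rhoStar δ ρ y s = t := by
  induction t with
  | nil => exact fun y => ⟨[], rfl⟩
  | cons j t ih =>
      intro y
      obtain ⟨i, hi⟩ := (hInv y).2 j
      obtain ⟨s, hs⟩ := ih (δ i y)
      exact ⟨i :: s, by simp [rhoStar, hi, hs]⟩

lemma applyWord_deltaStar_cons (δ : Γ → Q → Q) (ρ : Q → Γ → Γ)
    (s : List Γ) (y : Q) (w : List Q) :
    applyWord (deltaStar δ ρ) s (y :: w) =
      applyWord δ s y :: applyWord (deltaStar δ ρ) (rhoStar δ ρ y s) w := by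
  induction s generalizing y w with
  | nil => rfl
  | cons i s ih => simp [applyWord, deltaStar, rhoStar, ih]

end Aux

/-- Let `A` be a connected invertible reversible Mealy
automaton, `T` the connected component of a word `u0` of length `m ≥ 1` in
`A^m`, `L` the connected component of a word `v0` of length `m + 1` in
`A^{m+1}`; if every word of `L` has its length-`m` suffix in `T`, then `T`
is the union over `x ∈ Q` of the left quotients `x⁻¹L = {u : x·u ∈ L}`. -/
theorem top_component_eq_union_of_left_quotients
    {Q Γ : Type*} [Fintype Q] [Fintype Γ] [Nonempty Q] [Nonempty Γ]
    (δ : Γ → Q → Q) (ρ : Q → Γ → Γ)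
    (hConn : MConnected δ) (hInv : MInvertible ρ) (hRev : MReversible δ)
    (m : ℕ) (hm : 1 ≤ m) (u0 v0 : List Q)
    (hu0 : u0.length = m) (hv0 : v0.length = m + 1)
    (hlift : ∀ w ∈ orbitOf (deltaStar δ ρ) v0,
      w.drop 1 ∈ orbitOf (deltaStar δ ρ) u0) :
    orbitOf (deltaStar δ ρ) u0 =
      ⋃ x : Q, {u : List Q | x :: u ∈ orbitOf (deltaStar δ ρ) v0} := by
  ext u
  simp only [Set.mem_iUnion, Set.mem_setOf_eq]
  constructor
  · intro hu
    -- v0 = y :: w0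
    obtain ⟨y, w0, rfl⟩ : ∃ y w0, v0 = y :: w0 := by
      cases v0 with
      | nil => simp at hv0
      | cons y w0 => exact ⟨y, w0, rfl⟩
    have hw0 : w0 ∈ orbitOf (deltaStar δ ρ) u0 := by
      have := hlift (y :: w0) ⟨[], rfl⟩
      simpa using this
    have hfin : (orbitOf (deltaStar δ ρ) u0).Finite := by
      apply Set.Finite.subset (List.finite_length_eq (α := Q) (n := m))
      rintro w ⟨s, rfl⟩
      simp [applyWord_deltaStar_length, hu0]
    obtain ⟨s2, hs2⟩ := hw0
    obtain ⟨s3, hs3⟩ := orbit_symm (deltaStar δ ρ)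
      (fun i => deltaStar_injective δ ρ hRev i) hfin s2 hs2
    obtain ⟨s1, hs1⟩ := hu
    -- t sends w0 to u
    have ht : applyWord (deltaStar δ ρ) (s3 ++ s1) w0 = u := by
      rw [applyWord_append, hs3, hs1]
    obtain ⟨s, hs⟩ := rhoStar_surj δ ρ hInv (s3 ++ s1) y
    refine ⟨applyWord δ s y, s, ?_⟩
    rw [applyWord_deltaStar_cons, hs, ht]
  · rintro ⟨x, hx⟩
    have := hlift (x :: u) hx
    simpa using this
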